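/- In the setting of iterated silting reduction, the truncation functors satisfy: σ^{>0}_{σ_P^{-1}(Q)} is naturally isomorphic to the composite σ^{>0}_Q ∘ σ^{>0}_P. Consequently the composition rule (Q, P) ↦ σ_P^{-1}(Q) in the τ-cluster morphism category C_{D,S} is associative: R ∘ (Q ∘ P) = (R ∘ Q) ∘ P for composable morphisms P, Q, R. -/

import Mathlib

open CategoryTheory Limits Pretriangulated ZeroObject

universe v u

namespace Paper

variable {C : Type u} [Category.{v} C] [Preadditive C] [HasZeroObject C]
  [HasShift C ℤ] [∀ n : ℤ, (CategoryTheory.shiftFunctor C n).Additive] [Pretriangulated C]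
  [HasBinaryBiproducts C]

/-- A class of objects closed under isomorphism. -/
def ClosedIso (P : C → Prop) : Prop := ∀ ⦃X Y : C⦄, (X ≅ Y) → P X → P Y

/-- A class of objects closed under extensions. -/
def ExtClosed (P : C → Prop) : Prop :=
  ∀ T : Triangle C, T ∈ (distTriang C) → P T.obj₁ → P T.obj₃ → P T.obj₂

/-- A suspended subcategory: additive (iso-closed, contains 0, closed under finite sums via
extensions), closed under the suspension `Σ = ⟦1⟧` and under extensions. -/
structure Suspended (P : C → Prop) : Prop where
  iso : ClosedIso P
  zero : P 0
  shift : ∀ ⦃X : C⦄, P X → P (X⟦(1:ℤ)⟧)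
  ext : ExtClosed P

/-- A t-structure `(L, G) = (D^{≤0}, D^{>0})`: Hom-orthogonality, every object is an extension,
`L` is suspended; both classes are closed under isomorphism. -/
structure IsTStr (L G : C → Prop) : Prop where
  isoL : ClosedIso L
  isoG : ClosedIso G
  zeroL : L 0
  homZero : ∀ ⦃X Y : C⦄, L X → G Y → ∀ f : X ⟶ Y, f = 0
  trunc : ∀ X : C, ∃ (A B : C) (f : A ⟶ X) (g : X ⟶ B) (h : B ⟶ A⟦(1:ℤ)⟧),
    Triangle.mk f g h ∈ (distTriang C) ∧ L A ∧ G B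
  shiftL : ∀ ⦃X : C⦄, L X → L (X⟦(1:ℤ)⟧)
  extL : ExtClosed L

/-- The right orthogonal `U^{⊥₀}` of a class of objects. -/
def rightOrth (U : C → Prop) (Y : C) : Prop := ∀ X : C, U X → ∀ f : X ⟶ Y, f = 0

/-- `Y ∈ P^{⊥_{≤ m}}`: `Hom(P, Σ^i Y) = 0` for all `i ≤ m`. -/
def perpLe (P : C) (m : ℤ) (Y : C) : Prop := ∀ i : ℤ, i ≤ m → ∀ f : P ⟶ Y⟦i⟧, f = 0

/-- `Y ∈ P^{⊥_{> m}}`: `Hom(P, Σ^i Y) = 0` for all `i > m`. -/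
def perpGt (P : C) (m : ℤ) (Y : C) : Prop := ∀ i : ℤ, m < i → ∀ f : P ⟶ Y⟦i⟧, f = 0

/-- `Y ∈ P^{⊥_ℤ}`: `Hom(P, Σ^i Y) = 0` for all integers `i`. -/
def perpZ (P : C) (Y : C) : Prop := ∀ i : ℤ, ∀ f : P ⟶ Y⟦i⟧, f = 0

/-- `X ∈ ^{⊥_{>0}}P`: `Hom(X, Σ^i P) = 0` for all `i > 0`. -/
def leftPerpGt0 (P : C) (X : C) : Prop := ∀ i : ℤ, 0 < i → ∀ f : X ⟶ P⟦i⟧, f = 0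

/-- `susp(P)`, the smallest suspended subcategory containing `P`. -/
def suspObj (P : C) (X : C) : Prop := ∀ U : C → Prop, Suspended U → U P → U X

/-- An additive subcategory closed under direct summands. -/
structure AddSub (U : C → Prop) : Prop where
  iso : ClosedIso U
  zero : U 0
  biprod : ∀ X Y : C, U X → U Y → U (X ⊞ Y)
  summand : ∀ X Y : C, U (X ⊞ Y) → U X

/-- `add(P)`: the additive closure of `P` (finite direct sums of direct summands). -/
def addObj (P : C) (X : C) : Prop := ∀ U : C → Prop, AddSub U → U P → U X

/-- A thick triangulated subcategory. -/
structure ThickSub (U : C → Prop) : Prop where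
  iso : ClosedIso U
  zero : U 0
  shift : ∀ ⦃X : C⦄, U X → ∀ n : ℤ, U (X⟦n⟧)
  ext : ExtClosed U
  summand : ∀ X Y : C, U (X ⊞ Y) → U X

/-- `thick(P)`: the smallest thick subcategory containing `P`. -/
def thickObj (P : C) (X : C) : Prop := ∀ U : C → Prop, ThickSub U → U P → U X

/-- A triangulated subcategory (iso-closed, shift-closed both ways, extension-closed). -/
structure TriangSub (U : C → Prop) : Prop where
  iso : ClosedIso U
  zero : U 0
  shift : ∀ ⦃X : C⦄, U X → ∀ n : ℤ, U (X⟦n⟧)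
  ext : ExtClosed U

/-- `P` is presilting: `Hom(P, Σ^n P) = 0` for all `n > 0`. -/
def Presilting (P : C) : Prop := ∀ n : ℤ, 0 < n → ∀ f : P ⟶ P⟦n⟧, f = 0

/-- `P` is partial silting: `(susp(P), P^{⊥_{≤0}})` is a t-structure and
`susp(P) ⊆ P^{⊥_{>0}}`. -/
def PartialSilting (P : C) : Prop :=
  IsTStr (suspObj P) (perpLe P 0) ∧ ∀ X : C, suspObj P X → perpGt P 0 X

/-- `S` is silting: partial silting with `susp(S) = S^{⊥_{>0}}`. -/
def Silting (S : C) : Prop :=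
  PartialSilting S ∧ ∀ X : C, suspObj S X ↔ perpGt S 0 X

/-- `X ∈ D^{≤ n}` for the t-structure with aisle `L`. -/
def DLe (L : C → Prop) (n : ℤ) (X : C) : Prop := L (X⟦n⟧)

/-- `X ∈ D^{> m}` for the t-structure with co-aisle `G`. -/
def DGt (G : C → Prop) (m : ℤ) (X : C) : Prop := G (X⟦m⟧)

/-- The t-structure `(L, G)` is bounded. -/
def BoundedTStr (L G : C → Prop) : Prop :=
  ∀ X : C, (∃ n : ℤ, DLe L n X) ∧ (∃ m : ℤ, DGt G m X)

/-- `H` is (a choice of) the `i`-th cohomology `H^i(X) = σ^{≤ i} σ^{> i-1} X` of `X` with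
respect to the t-structure `(L, G)`, expressed by the two truncation triangles. -/
def IsCohomAt (L G : C → Prop) (i : ℤ) (X H : C) : Prop :=
  ∃ (A B B' : C) (f : A ⟶ X) (g : X ⟶ B) (h : B ⟶ A⟦(1:ℤ)⟧)
    (f' : H ⟶ B) (g' : B ⟶ B') (h' : B' ⟶ H⟦(1:ℤ)⟧),
    Triangle.mk f g h ∈ (distTriang C) ∧ DLe L (i-1) A ∧ DGt G (i-1) B ∧
    Triangle.mk f' g' h' ∈ (distTriang C) ∧ DLe L i H ∧ DGt G i B'

/-- The heart `D^0 = D^{≤0} ∩ D^{>-1}` of the t-structure `(L, G)`. -/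
def Heart (L G : C → Prop) (X : C) : Prop := L X ∧ DGt G (-1) X

/-- A t-exact subcategory: a triangulated subcategory closed under the truncation `σ^{≤0}`
of the t-structure `(L, G)`. -/
def TExactSub (L G : C → Prop) (S : C → Prop) : Prop :=
  TriangSub S ∧
    ∀ (X A B : C) (f : A ⟶ X) (g : X ⟶ B) (h : B ⟶ A⟦(1:ℤ)⟧),
      S X → Triangle.mk f g h ∈ (distTriang C) → L A → G B → S A


/-- The class of objects `U` admits coreflections: every object has a couniversal morphism
from `U`, i.e. the inclusion of `U` admits a right adjoint. -/
def HasCoreflections (U : C → Prop) : Prop :=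
  ∀ X : C, ∃ (A : C) (ε : A ⟶ X), U A ∧
    ∀ A' : C, U A' → ∀ g : A' ⟶ X, ∃! g' : A' ⟶ A, g' ≫ ε = g

/-- `X` is a `2_S`-term object: `X ∈ add(S) * Σ add(S)`. -/
def TwoTerm (S X : C) : Prop :=
  ∃ (S₁ S₀ : C) (f : S₁ ⟶ S₀) (g : S₀ ⟶ X) (h : X ⟶ S₁⟦(1:ℤ)⟧),
    Triangle.mk f g h ∈ (distTriang C) ∧ addObj S S₁ ∧ addObj S S₀

/-- `X` is indecomposable. -/
def Indec (X : C) : Prop :=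
  ¬ IsZero X ∧ ∀ Y Z : C, (X ≅ Y ⊞ Z) → IsZero Y ∨ IsZero Z

/-- `add(A)` is contravariantly finite: every object admits a right `add(A)`-approximation. -/
def ContravFinAdd (A : C) : Prop :=
  ∀ X : C, ∃ (Q : C) (q : Q ⟶ X), addObj A Q ∧
    ∀ Q' : C, addObj A Q' → ∀ g : Q' ⟶ X, ∃ g' : Q' ⟶ Q, g' ≫ q = g

/-- `S` is a bounded silting object. -/
def BoundedSilting (S : C) : Prop :=
  Silting S ∧ BoundedTStr (suspObj S) (perpLe S 0)

/-- Hom-finiteness of `C` over a field `k`. -/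
def HomFinite (k : Type w) [Field k] [Linear k C] : Prop :=
  ∀ X Y : C, FiniteDimensional k (X ⟶ Y)

/-- The Krull–Schmidt property: every object is a finite direct sum of objects with local
endomorphism rings. -/
def KrullSchmidt : Prop :=
  ∀ X : C, ∃ l : List C, (∀ Y ∈ l, IsLocalRing (End Y)) ∧
    Nonempty (X ≅ l.foldr (· ⊞ ·) 0)

/-- A wide subcategory of the heart of the t-structure `(L, G)`: closed under isomorphisms,
extensions, kernels and cokernels (the latter two expressed via cones and cohomology). -/
structure HeartWide (L G W : C → Prop) : Prop where
  sub : ∀ ⦃X : C⦄, W X → Heart L G X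
  iso : ClosedIso W
  ext : ∀ (X Y Z : C) (f : X ⟶ Y) (g : Y ⟶ Z) (h : Z ⟶ X⟦(1:ℤ)⟧),
    W X → W Z → Heart L G Y → Triangle.mk f g h ∈ (distTriang C) → W Y
  kerCoker : ∀ (X Y Z : C) (f : X ⟶ Y) (g : Y ⟶ Z) (h : Z ⟶ X⟦(1:ℤ)⟧),
    W X → W Y → Triangle.mk f g h ∈ (distTriang C) →
    (∀ K : C, IsCohomAt L G (-1) Z K → W K) ∧ (∀ Q : C, IsCohomAt L G 0 Z Q → W Q)

/-- The subgroup of relations defining `K₀` of the thick subcategory `S`. -/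
def K0Rel (S : C → Prop) : AddSubgroup (FreeAbelianGroup C) :=
  AddSubgroup.closure
    {x | (∃ X : C, ¬ S X ∧ x = FreeAbelianGroup.of X) ∨
      ∃ T : Triangle C, T ∈ (distTriang C) ∧ S T.obj₁ ∧ S T.obj₂ ∧ S T.obj₃ ∧
        x = FreeAbelianGroup.of T.obj₂ - FreeAbelianGroup.of T.obj₁
          - FreeAbelianGroup.of T.obj₃}

/-- The Grothendieck group of the (thick) subcategory `S`. -/
abbrev K0 (S : C → Prop) := FreeAbelianGroup C ⧸ K0Rel S

/-- The class `[X]` in the Grothendieck group. -/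
def K0cls (S : C → Prop) (X : C) : K0 S :=
  QuotientAddGroup.mk (FreeAbelianGroup.of X)

/-- A `2_S`-term presilting sequence `(X₁, …, X_t)` in the ambient subcategory `Amb` with respect
to the silting object `S`, defined recursively: the last term `X` is an indecomposable `2_S`-term
presilting object, and the truncated sequence is a `2_{σ^{>0}_X T}`-term presilting sequence in
`Amb ∩ X^{⊥_ℤ}`, where `T = X ⊕ Q` is the Bongartz completion of `X`. -/
inductive PresiltSeq : (C → Prop) → C → List C → Prop
  | nil (Amb : C → Prop) (S : C) : PresiltSeq Amb S []
  | cons (Amb : C → Prop) (S X : C) (l : List C)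
      (hX : Amb X) (h2 : TwoTerm S X) (hpre : Presilting X) (hind : Indec X)
      -- Bongartz completion `T = X ⊞ Q`, via an approximation triangle `S → Q → X₀ → ΣS`
      (Q X₀ : C) (i : S ⟶ Q) (p : Q ⟶ X₀) (β : X₀ ⟶ S⟦(1:ℤ)⟧)
      (hB : Triangle.mk i p β ∈ (distTriang C)) (hX₀ : addObj X X₀)
      (happrox : ∀ X' : C, addObj X X' → ∀ g : X' ⟶ S⟦(1:ℤ)⟧, ∃ g', g' ≫ β = g)
      -- the truncation `T' = σ^{>0}_X (X ⊞ Q)`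
      (T' A : C) (f : A ⟶ X ⊞ Q) (g : X ⊞ Q ⟶ T') (h : T' ⟶ A⟦(1:ℤ)⟧)
      (hTr : Triangle.mk f g h ∈ (distTriang C)) (hA : suspObj X A) (hT' : perpLe X 0 T')
      (hrest : PresiltSeq (fun Y => Amb Y ∧ perpZ X Y) T' l) :
      PresiltSeq Amb S (l ++ [X])



section Toolkit
set_option linter.unusedSectionVars false

/-! ### Elementary vanishing-of-homs toolkit -/

/-- There are no nonzero morphisms `X ⟶ Y`. -/
def NoHom (X Y : C) : Prop := ∀ f : X ⟶ Y, f = 0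

lemma noHom_src_iso {X X' Y : C} (e : X ≅ X') (h : NoHom X Y) : NoHom X' Y := fun f => by
  have h1 : e.hom ≫ f = 0 := h _
  calc f = e.inv ≫ (e.hom ≫ f) := by simp
  _ = 0 := by rw [h1, comp_zero]

lemma noHom_tgt_iso {X Y Y' : C} (e : Y ≅ Y') (h : NoHom X Y) : NoHom X Y' := fun f => by
  have h1 : f ≫ e.inv = 0 := h _
  calc f = (f ≫ e.inv) ≫ e.hom := by simp
  _ = 0 := by rw [h1, zero_comp]

lemma noHom_src_isZero {X Y : C} (h : IsZero X) : NoHom X Y := fun f => h.eq_of_src f 0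
lemma noHom_tgt_isZero {X Y : C} (h : IsZero Y) : NoHom X Y := fun f => h.eq_of_tgt f 0

lemma noHom_shift {X Y : C} (n : ℤ) (h : NoHom X Y) : NoHom (X⟦n⟧) (Y⟦n⟧) := fun f => by
  obtain ⟨g, rfl⟩ := (CategoryTheory.shiftFunctor C n).map_surjective f
  rw [h g, Functor.map_zero]

lemma noHom_tgt_shift_shift {X Y : C} (a b c : ℤ) (hab : a + b = c)
    (h : NoHom X (Y⟦c⟧)) : NoHom X ((Y⟦a⟧)⟦b⟧) :=
  noHom_tgt_iso ((shiftFunctorAdd' C a b c hab).app Y) h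

lemma noHom_tgt_shift_shift' {X Y : C} (a b c : ℤ) (hab : a + b = c)
    (h : NoHom X ((Y⟦a⟧)⟦b⟧)) : NoHom X (Y⟦c⟧) :=
  noHom_tgt_iso ((shiftFunctorAdd' C a b c hab).app Y).symm h

lemma noHom_shift_src {X Z : C} (a b c : ℤ) (hab : a + b = c)
    (h : NoHom X (Z⟦a⟧)) : NoHom (X⟦b⟧) (Z⟦c⟧) :=
  noHom_tgt_shift_shift' a b c hab (noHom_shift b h)

lemma noHom_shift_zero {X Z : C} (h : NoHom X (Z⟦(0:ℤ)⟧)) : NoHom X Z :=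
  noHom_tgt_iso ((shiftFunctorZero C ℤ).app Z) h

lemma noHom_shift_zero' {X Z : C} (h : NoHom X Z) : NoHom X (Z⟦(0:ℤ)⟧) :=
  noHom_tgt_iso ((shiftFunctorZero C ℤ).app Z).symm h

/-! ### Biproducts -/

lemma noHom_biprod_src {X Y Z : C} (h1 : NoHom X Z) (h2 : NoHom Y Z) : NoHom (X ⊞ Y) Z :=
  fun f => by
    apply biprod.hom_ext' <;> simp [h1 (biprod.inl ≫ f), h2 (biprod.inr ≫ f)]

lemma noHom_biprod_tgt {X Y Z : C} (h1 : NoHom Z X) (h2 : NoHom Z Y) : NoHom Z (X ⊞ Y) :=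
  fun f => by
    apply biprod.hom_ext <;> simp [h1 (f ≫ biprod.fst), h2 (f ≫ biprod.snd)]

lemma noHom_of_biprod_src₁ {X Y Z : C} (h : NoHom (X ⊞ Y) Z) : NoHom X Z := fun f => by
  have : biprod.fst ≫ f = 0 := h _
  calc f = biprod.inl ≫ biprod.fst ≫ f := by simp
  _ = 0 := by rw [this, comp_zero]

lemma noHom_of_biprod_src₂ {X Y Z : C} (h : NoHom (X ⊞ Y) Z) : NoHom Y Z := fun f => by
  have : biprod.snd ≫ f = 0 := h _
  calc f = biprod.inr ≫ biprod.snd ≫ f := by simp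
  _ = 0 := by rw [this, comp_zero]

lemma noHom_of_biprod_tgt₁ {X Y Z : C} (h : NoHom Z (X ⊞ Y)) : NoHom Z X := fun f => by
  have : f ≫ biprod.inl = 0 := h _
  calc f = (f ≫ biprod.inl) ≫ biprod.fst := by simp
  _ = 0 := by rw [this, zero_comp]

lemma noHom_shift_biprod_tgt {W A B : C} (n : ℤ) (h1 : NoHom W (A⟦n⟧)) (h2 : NoHom W (B⟦n⟧)) :
    NoHom W ((A ⊞ B)⟦n⟧) := fun f => by
  have htot : (biprod.fst ≫ biprod.inl : A ⊞ B ⟶ A ⊞ B) + biprod.snd ≫ biprod.inr = 𝟙 _ :=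
    biprod.total
  have : f ≫ (𝟙 (A ⊞ B))⟦n⟧' = f := by simp
  rw [← this, ← htot, Functor.map_add, Preadditive.comp_add, Functor.map_comp, Functor.map_comp,
    ← Category.assoc, ← Category.assoc, h1 (f ≫ biprod.fst⟦n⟧'), h2 (f ≫ biprod.snd⟦n⟧'),
    zero_comp, zero_comp, add_zero]

lemma noHom_shift_of_biprod_tgt₁ {W A B : C} (n : ℤ) (h : NoHom W ((A ⊞ B)⟦n⟧)) :
    NoHom W (A⟦n⟧) := fun f => by
  have h0 : f ≫ biprod.inl⟦n⟧' = 0 := h _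
  have : f ≫ ((biprod.inl : A ⟶ A ⊞ B) ≫ biprod.fst)⟦n⟧' = f := by simp
  rw [← this, Functor.map_comp, ← Category.assoc, h0, zero_comp]

lemma noHom_shift_of_biprod_tgt₂ {W A B : C} (n : ℤ) (h : NoHom W ((A ⊞ B)⟦n⟧)) :
    NoHom W (B⟦n⟧) := fun f => by
  have h0 : f ≫ biprod.inr⟦n⟧' = 0 := h _
  have : f ≫ ((biprod.inr : B ⟶ A ⊞ B) ≫ biprod.snd)⟦n⟧' = f := by simp
  rw [← this, Functor.map_comp, ← Category.assoc, h0, zero_comp]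

/-! ### Long exact sequence style lemmas -/

lemma noHom_ext₂_tgt {T : Triangle C} (hT : T ∈ distTriang C) {W : C}
    (h1 : NoHom W T.obj₁) (h3 : NoHom W T.obj₃) : NoHom W T.obj₂ := fun f => by
  obtain ⟨g, hg⟩ := Triangle.coyoneda_exact₂ T hT f (by rw [h3 (f ≫ T.mor₂)])
  rw [hg, h1 g, zero_comp]

lemma noHom_ext₂_src {T : Triangle C} (hT : T ∈ distTriang C) {W : C}
    (h1 : NoHom T.obj₁ W) (h3 : NoHom T.obj₃ W) : NoHom T.obj₂ W := fun f => by
  obtain ⟨g, hg⟩ := Triangle.yoneda_exact₂ T hT f (by rw [h1 (T.mor₁ ≫ f)])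
  rw [hg, h3 g, comp_zero]

lemma noHom_ext₃_tgt {T : Triangle C} (hT : T ∈ distTriang C) {W : C}
    (h2 : NoHom W T.obj₂) (h1 : NoHom W (T.obj₁⟦(1:ℤ)⟧)) : NoHom W T.obj₃ :=
  noHom_ext₂_tgt (rot_of_distTriang T hT) h2 h1

lemma noHom_ext₃_src {T : Triangle C} (hT : T ∈ distTriang C) {W : C}
    (h2 : NoHom T.obj₂ W) (h1 : NoHom (T.obj₁⟦(1:ℤ)⟧) W) : NoHom T.obj₃ W :=
  noHom_ext₂_src (rot_of_distTriang T hT) h2 h1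

lemma noHom_ext₁_tgt {T : Triangle C} (hT : T ∈ distTriang C) {W : C}
    (h3 : NoHom W (T.obj₃⟦(-1:ℤ)⟧)) (h2 : NoHom W T.obj₂) : NoHom W T.obj₁ :=
  noHom_ext₂_tgt (inv_rot_of_distTriang T hT) h3 h2

lemma noHom_ext₁_src {T : Triangle C} (hT : T ∈ distTriang C) {W : C}
    (h3 : NoHom (T.obj₃⟦(-1:ℤ)⟧) W) (h2 : NoHom T.obj₂ W) : NoHom T.obj₁ W :=
  noHom_ext₂_src (inv_rot_of_distTriang T hT) h3 h2

end Toolkit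


section Toolkit2
set_option linter.unusedSectionVars false

/-! ### Suspended subcategories generated by an object -/

lemma suspObj_self (T : C) : suspObj T T := fun _ _ h => h

lemma suspended_suspObj (T : C) : Suspended (suspObj T) where
  iso := fun _ _ e h U hU hT => hU.iso e (h U hU hT)
  zero := fun U hU _ => hU.zero
  shift := fun _ h U hU hT => hU.shift (h U hU hT)
  ext := fun T' hT' h1 h3 U hU hT => hU.ext T' hT' (h1 U hU hT) (h3 U hU hT)

lemma suspObj_min {U : C → Prop} (hU : Suspended U) {T : C} (hT : U T) {X : C}
    (h : suspObj T X) : U X := h U hU hT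

lemma suspObj_mono {T T' X : C} (hTT' : suspObj T' T) (h : suspObj T X) : suspObj T' X :=
  fun U hU hT' => h U hU (hTT' U hU hT')

/-- Morphisms out of `susp M` into all shifts of a fixed object `Z` with
`Hom(M, Z⟦n⟧) = 0` for all `n` vanish. -/
lemma susp_noHom_src_all {M Z : C} (hZ : ∀ n : ℤ, NoHom M (Z⟦n⟧)) {X : C}
    (hX : suspObj M X) : ∀ n : ℤ, NoHom X (Z⟦n⟧) := by
  refine suspObj_min (U := fun Y => ∀ n : ℤ, NoHom Y (Z⟦n⟧)) ⟨?_, ?_, ?_, ?_⟩ hZ hX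
  · exact fun X' Y' e h n => noHom_src_iso e (h n)
  · exact fun n => noHom_src_isZero (isZero_zero C)
  · exact fun Y h n => noHom_shift_src (n-1) 1 n (by ring) (h (n-1))
  · exact fun T' hT' h1 h3 n => noHom_ext₂_src hT' (h1 n) (h3 n)

lemma susp_noHom_src_le {M Z : C} (hZ : ∀ i : ℤ, i ≤ 0 → NoHom M (Z⟦i⟧)) {X : C}
    (hX : suspObj M X) : ∀ i : ℤ, i ≤ 0 → NoHom X (Z⟦i⟧) := by
  refine suspObj_min (U := fun Y => ∀ i : ℤ, i ≤ 0 → NoHom Y (Z⟦i⟧)) ⟨?_, ?_, ?_, ?_⟩ hZ hX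
  · exact fun X' Y' e h i hi => noHom_src_iso e (h i hi)
  · exact fun i _ => noHom_src_isZero (isZero_zero C)
  · exact fun Y h i hi => noHom_shift_src (i-1) 1 i (by ring) (h (i-1) (by omega))
  · exact fun T' hT' h1 h3 i hi => noHom_ext₂_src hT' (h1 i hi) (h3 i hi)

/-- Morphisms from a fixed object `W` into all shifts of `susp M` objects vanish,
provided they vanish into all shifts of `M`. -/
lemma susp_noHom_tgt_all {M W : C} (hW : ∀ n : ℤ, NoHom W (M⟦n⟧)) {X : C}
    (hX : suspObj M X) : ∀ n : ℤ, NoHom W (X⟦n⟧) := by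
  refine suspObj_min (U := fun Y => ∀ n : ℤ, NoHom W (Y⟦n⟧)) ⟨?_, ?_, ?_, ?_⟩ hW hX
  · exact fun X' Y' e h n => noHom_tgt_iso ((CategoryTheory.shiftFunctor C n).mapIso e) (h n)
  · intro n
    exact noHom_tgt_isZero ((CategoryTheory.shiftFunctor C n).map_isZero (isZero_zero C))
  · exact fun Y h n => noHom_tgt_shift_shift 1 n (1+n) rfl (h (1+n))
  · intro T' hT' h1 h3 n
    exact noHom_ext₂_tgt (Triangle.shift_distinguished T' hT' n) (h1 n) (h3 n)

lemma susp_noHom_tgt_pos {M W : C} (hW : ∀ i : ℤ, 0 < i → NoHom W (M⟦i⟧)) {X : C}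
    (hX : suspObj M X) : ∀ i : ℤ, 0 < i → NoHom W (X⟦i⟧) := by
  refine suspObj_min (U := fun Y => ∀ i : ℤ, 0 < i → NoHom W (Y⟦i⟧)) ⟨?_, ?_, ?_, ?_⟩ hW hX
  · exact fun X' Y' e h i hi => noHom_tgt_iso ((CategoryTheory.shiftFunctor C i).mapIso e) (h i hi)
  · intro i _
    exact noHom_tgt_isZero ((CategoryTheory.shiftFunctor C i).map_isZero (isZero_zero C))
  · exact fun Y h i hi => noHom_tgt_shift_shift 1 i (1+i) rfl (h (1+i) (by omega))
  · intro T' hT' h1 h3 i hi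
    exact noHom_ext₂_tgt (Triangle.shift_distinguished T' hT' i) (h1 i hi) (h3 i hi)

/-! ### Retracts -/

/-- `X` is a retract of `Y`. -/
def RetractOf (X Y : C) : Prop := ∃ (s : X ⟶ Y) (p : Y ⟶ X), s ≫ p = 𝟙 X

lemma retractOf_refl (X : C) : RetractOf X X := ⟨𝟙 X, 𝟙 X, by simp⟩

lemma retractOf_trans {X Y Z : C} (h1 : RetractOf X Y) (h2 : RetractOf Y Z) : RetractOf X Z := by
  obtain ⟨s, p, hsp⟩ := h1
  obtain ⟨s', p', hsp'⟩ := h2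
  exact ⟨s ≫ s', p' ≫ p, by
    rw [Category.assoc, ← Category.assoc s', hsp', Category.id_comp, hsp]⟩

lemma retractOf_of_iso {X Y : C} (e : X ≅ Y) : RetractOf X Y := ⟨e.hom, e.inv, by simp⟩

lemma retractOf_biprod_left (X Y : C) : RetractOf X (X ⊞ Y) := ⟨biprod.inl, biprod.fst, by simp⟩
lemma retractOf_biprod_right (X Y : C) : RetractOf Y (X ⊞ Y) := ⟨biprod.inr, biprod.snd, by simp⟩

lemma noHom_src_retract {X Y Z : C} (h : RetractOf X Y) (hY : NoHom Y Z) : NoHom X Z := by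
  obtain ⟨s, p, hsp⟩ := h
  intro f
  calc f = s ≫ (p ≫ f) := by rw [← Category.assoc, hsp, Category.id_comp]
  _ = 0 := by rw [hY (p ≫ f), comp_zero]

/-! ### Additive closure -/

lemma addObj_self (T : C) : addObj T T := fun _ _ h => h

lemma addSub_addObj (T : C) : AddSub (addObj T) where
  iso := fun _ _ e h U hU hT => hU.iso e (h U hU hT)
  zero := fun U hU _ => hU.zero
  biprod := fun X Y hX hY U hU hT => hU.biprod X Y (hX U hU hT) (hY U hU hT)
  summand := fun X Y h U hU hT => hU.summand X Y (h U hU hT)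

lemma addObj_min {U : C → Prop} (hU : AddSub U) {T : C} (hT : U T) {X : C}
    (h : addObj T X) : U X := h U hU hT

lemma addObj_trans {T T' X : C} (h1 : addObj T' T) (h2 : addObj T X) : addObj T' X :=
  fun U hU hT' => h2 U hU (h1 U hU hT')

lemma addObj_iso {T X Y : C} (e : X ≅ Y) (h : addObj T X) : addObj T Y :=
  (addSub_addObj T).iso e h

lemma addObj_biprod_left (A B : C) : addObj (A ⊞ B) A := fun _ hU h => hU.summand _ _ h

lemma addObj_biprod_right (A B : C) : addObj (A ⊞ B) B := fun _ hU h =>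
  hU.summand _ _ (hU.iso (biprod.braiding A B) h)

lemma list_sum_comp {X Y Z : C} (l : List (X ⟶ Y)) (g : Y ⟶ Z) :
    l.sum ≫ g = (l.map (· ≫ g)).sum := by
  induction l with
  | nil => simp
  | cons a t ih => simp [Preadditive.add_comp, ih]

lemma list_comp_sum {X Y Z : C} (g : X ⟶ Y) (l : List (Y ⟶ Z)) :
    g ≫ l.sum = (l.map (g ≫ ·)).sum := by
  induction l with
  | nil => simp
  | cons a t ih => simp [Preadditive.comp_add, ih]

lemma list_map_sum_conj {α : Type*} (l : List α) {A B : C} (u : A ⟶ B) (v : B ⟶ A)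
    (f : α → (B ⟶ B)) :
    (l.map fun x => u ≫ f x ≫ v).sum = u ≫ (l.map f).sum ≫ v := by
  induction l with
  | nil => simp
  | cons a t ih => simp [Preadditive.comp_add, Preadditive.add_comp, ih]

/-- Membership in the additive closure yields a finite family of maps through `T`
decomposing the identity. -/
lemma addObj_pairs {T X : C} (h : addObj T X) :
    ∃ l : List ((X ⟶ T) × (T ⟶ X)), (l.map fun q => q.1 ≫ q.2).sum = 𝟙 X := by
  refine addObj_min (U := fun X => ∃ l : List ((X ⟶ T) × (T ⟶ X)),
    (l.map fun q => q.1 ≫ q.2).sum = 𝟙 X) ⟨?_, ?_, ?_, ?_⟩ ⟨[(𝟙 T, 𝟙 T)], by simp⟩ h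
  · rintro X' Y' e ⟨l, hl⟩
    refine ⟨l.map fun q => (e.inv ≫ q.1, q.2 ≫ e.hom), ?_⟩
    rw [List.map_map]
    have heq : ((fun q : (Y' ⟶ T) × (T ⟶ Y') => q.1 ≫ q.2) ∘
        fun q : (X' ⟶ T) × (T ⟶ X') => (e.inv ≫ q.1, q.2 ≫ e.hom)) =
        fun q : (X' ⟶ T) × (T ⟶ X') => e.inv ≫ (q.1 ≫ q.2) ≫ e.hom := by
      funext q; simp
    rw [heq, list_map_sum_conj, hl]; simp
  · exact ⟨[], by
      simp only [List.map_nil, List.sum_nil]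
      exact ((isZero_zero C).eq_of_src _ _).symm⟩
  · rintro A B ⟨l1, hl1⟩ ⟨l2, hl2⟩
    refine ⟨(l1.map fun q => ((biprod.fst : A ⊞ B ⟶ A) ≫ q.1, q.2 ≫ biprod.inl)) ++
      (l2.map fun q => ((biprod.snd : A ⊞ B ⟶ B) ≫ q.1, q.2 ≫ biprod.inr)), ?_⟩
    rw [List.map_append, List.sum_append, List.map_map, List.map_map]
    have heq1 : ((fun q : (A ⊞ B ⟶ T) × (T ⟶ A ⊞ B) => q.1 ≫ q.2) ∘
        fun q : (A ⟶ T) × (T ⟶ A) => ((biprod.fst : A ⊞ B ⟶ A) ≫ q.1, q.2 ≫ biprod.inl)) =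
        fun q : (A ⟶ T) × (T ⟶ A) =>
          (biprod.fst : A ⊞ B ⟶ A) ≫ (q.1 ≫ q.2) ≫ biprod.inl := by
      funext q; simp
    have heq2 : ((fun q : (A ⊞ B ⟶ T) × (T ⟶ A ⊞ B) => q.1 ≫ q.2) ∘
        fun q : (B ⟶ T) × (T ⟶ B) => ((biprod.snd : A ⊞ B ⟶ B) ≫ q.1, q.2 ≫ biprod.inr)) =
        fun q : (B ⟶ T) × (T ⟶ B) =>
          (biprod.snd : A ⊞ B ⟶ B) ≫ (q.1 ≫ q.2) ≫ biprod.inr := by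
      funext q; simp
    rw [heq1, heq2, list_map_sum_conj, list_map_sum_conj, hl1, hl2]
    simp [biprod.total]
  · rintro A B ⟨l, hl⟩
    refine ⟨l.map fun q => ((biprod.inl : A ⟶ A ⊞ B) ≫ q.1, q.2 ≫ biprod.fst), ?_⟩
    rw [List.map_map]
    have heq : ((fun q : (A ⟶ T) × (T ⟶ A) => q.1 ≫ q.2) ∘
        fun q : (A ⊞ B ⟶ T) × (T ⟶ A ⊞ B) => ((biprod.inl : A ⟶ A ⊞ B) ≫ q.1, q.2 ≫ biprod.fst)) =
        fun q : (A ⊞ B ⟶ T) × (T ⟶ A ⊞ B) =>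
          (biprod.inl : A ⟶ A ⊞ B) ≫ (q.1 ≫ q.2) ≫ biprod.fst := by
      funext q; simp
    rw [heq, list_map_sum_conj, hl]; simp

end Toolkit2


section Toolkit3
set_option linter.unusedSectionVars false

/-! ### Local rings and Krull–Schmidt style arguments -/

/-- View an endomorphism as an element of the endomorphism ring. -/
def toEnd {X : C} (f : X ⟶ X) : End X := f

lemma exists_isUnit_of_list_sum_isUnit {R : Type*} [Ring R] [IsLocalRing R] :
    ∀ (l : List R), IsUnit l.sum → ∃ t ∈ l, IsUnit t := by
  intro l
  induction l with
  | nil =>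
    intro h
    simp only [List.sum_nil] at h
    exact absurd h not_isUnit_zero
  | cons a t ih =>
    intro h
    simp only [List.sum_cons] at h
    obtain ⟨u, hu⟩ := h
    have hsum : a * ↑u⁻¹ + t.sum * ↑u⁻¹ = 1 := by
      rw [← add_mul, ← hu, Units.mul_inv]
    rcases IsLocalRing.isUnit_or_isUnit_of_add_one hsum with h1 | h2
    · refine ⟨a, by simp, ?_⟩
      have ha : a = (a * ↑u⁻¹) * ↑u := by simp [mul_assoc]
      rw [ha]
      exact h1.mul u.isUnit
    · have hts : IsUnit t.sum := by
        have ht : t.sum = (t.sum * ↑u⁻¹) * ↑u := by simp [mul_assoc]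
        rw [ht]
        exact h2.mul u.isUnit
      obtain ⟨x, hx, hux⟩ := ih hts
      exact ⟨x, by simp [hx], hux⟩

lemma exists_isUnit_end_of_sum {X : C} (hloc : IsLocalRing (End X)) (l : List (X ⟶ X))
    (h : l.sum = 𝟙 X) : ∃ t ∈ l, IsUnit (toEnd t) := by
  refine exists_isUnit_of_list_sum_isUnit (R := End X) l ?_
  have h1 : List.sum (α := End X) l = 1 := h
  exact h1 ▸ isUnit_one

/-- If `t : X ⟶ X` is a unit in `End X`, there is a two-sided inverse morphism. -/
lemma exists_two_sided_inv {X : C} {t : X ⟶ X} (h : IsUnit (toEnd t)) :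
    ∃ w : X ⟶ X, t ≫ w = 𝟙 X ∧ w ≫ t = 𝟙 X := by
  obtain ⟨u, hu⟩ := h
  refine ⟨(↑u⁻¹ : End X), ?_, ?_⟩
  · calc t ≫ (↑u⁻¹ : End X) = ((↑u⁻¹ : End X) * toEnd t : End X) := rfl
    _ = ((↑u⁻¹ * ↑u : End X)) := by rw [hu]
    _ = 𝟙 X := u.inv_mul
  · calc (↑u⁻¹ : End X) ≫ t = (toEnd t * (↑u⁻¹ : End X) : End X) := rfl
    _ = ((↑u * ↑u⁻¹ : End X)) := by rw [hu]
    _ = 𝟙 X := u.mul_inv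

lemma retract_of_isUnit {X B : C} (s : X ⟶ B) (p : B ⟶ X) (h : IsUnit (toEnd (s ≫ p))) :
    RetractOf X B := by
  obtain ⟨w, hw, _⟩ := exists_two_sided_inv h
  exact ⟨s, p ≫ w, by rw [← Category.assoc, hw]⟩

lemma retract_fold_member {X : C} (hX : IsLocalRing (End X)) :
    ∀ l : List C, RetractOf X (l.foldr (· ⊞ ·) 0) → ∃ m ∈ l, RetractOf X m := by
  intro l
  induction l with
  | nil =>
    rintro ⟨s, p, hsp⟩
    exfalso
    haveI := hX
    have hs : s = 0 := (isZero_zero C).eq_of_tgt s 0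
    have h1 : 𝟙 X = 0 := by rw [← hsp, hs, zero_comp]
    exact one_ne_zero (α := End X) h1
  | cons a t ih =>
    intro hr
    rw [List.foldr_cons] at hr
    obtain ⟨s, p, hsp⟩ := hr
    haveI := hX
    have hdec : toEnd ((s ≫ biprod.fst) ≫ (biprod.inl ≫ p)) +
        toEnd ((s ≫ biprod.snd) ≫ (biprod.inr ≫ p)) = 1 := by
      show (s ≫ biprod.fst) ≫ (biprod.inl ≫ p) + (s ≫ biprod.snd) ≫ (biprod.inr ≫ p) = 𝟙 X
      rw [← hsp]
      have htot : (biprod.fst ≫ biprod.inl + biprod.snd ≫ biprod.inr :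
          a ⊞ (t.foldr (· ⊞ ·) 0) ⟶ _) = 𝟙 _ := biprod.total
      calc (s ≫ biprod.fst) ≫ (biprod.inl ≫ p) + (s ≫ biprod.snd) ≫ (biprod.inr ≫ p)
          = s ≫ (biprod.fst ≫ biprod.inl + biprod.snd ≫ biprod.inr) ≫ p := by
            simp only [Preadditive.add_comp, Preadditive.comp_add, Category.assoc]
      _ = s ≫ p := by rw [htot, Category.id_comp]
    rcases IsLocalRing.isUnit_or_isUnit_of_add_one hdec with h1 | h2
    · exact ⟨a, by simp, retract_of_isUnit _ _ h1⟩
    · obtain ⟨m, hm, hr⟩ := ih (retract_of_isUnit _ _ h2)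
      exact ⟨m, by simp [hm], hr⟩

lemma iso_of_retract_local {X m : C} (h : RetractOf X m) (hX : IsLocalRing (End X))
    (hm : IsLocalRing (End m)) : Nonempty (X ≅ m) := by
  obtain ⟨s, p, hsp⟩ := h
  haveI := hm
  have hee : (p ≫ s) ≫ (p ≫ s) = p ≫ s := by
    rw [Category.assoc, ← Category.assoc s, hsp, Category.id_comp]
  have hdec : toEnd (p ≫ s) + toEnd (𝟙 m - p ≫ s) = 1 := by
    show (p ≫ s) + (𝟙 m - p ≫ s) = 𝟙 m
    abel
  rcases IsLocalRing.isUnit_or_isUnit_of_add_one hdec with h1 | h2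
  · obtain ⟨w, hw, _⟩ := exists_two_sided_inv h1
    have hps : p ≫ s = 𝟙 m := by
      calc p ≫ s = (p ≫ s) ≫ ((p ≫ s) ≫ w) := by rw [hw, Category.comp_id]
      _ = ((p ≫ s) ≫ (p ≫ s)) ≫ w := by simp only [Category.assoc]
      _ = (p ≫ s) ≫ w := by rw [hee]
      _ = 𝟙 m := hw
    exact ⟨⟨s, p, hsp, hps⟩⟩
  · exfalso
    obtain ⟨w, hw, _⟩ := exists_two_sided_inv h2
    have hz : (p ≫ s) = 0 := by
      have h0 : (p ≫ s) ≫ (𝟙 m - p ≫ s) = 0 := by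
        rw [Preadditive.comp_sub, Category.comp_id, hee, sub_self]
      calc p ≫ s = (p ≫ s) ≫ ((𝟙 m - p ≫ s) ≫ w) := by rw [hw, Category.comp_id]
      _ = ((p ≫ s) ≫ (𝟙 m - p ≫ s)) ≫ w := by simp only [Category.assoc]
      _ = 0 := by rw [h0, zero_comp]
    haveI := hX
    have h1 : 𝟙 X = 0 := by
      calc 𝟙 X = (s ≫ p) ≫ (s ≫ p) := by rw [hsp, Category.id_comp]
      _ = s ≫ (p ≫ s) ≫ p := by simp only [Category.assoc]
      _ = 0 := by rw [hz, zero_comp, comp_zero]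
    exact one_ne_zero (α := End X) h1

lemma mem_retract_fold : ∀ (l : List C) {m : C}, m ∈ l → RetractOf m (l.foldr (· ⊞ ·) 0) := by
  intro l
  induction l with
  | nil => intro m hm; simp at hm
  | cons a t ih =>
    intro m hm
    rw [List.foldr_cons]
    rcases List.mem_cons.mp hm with rfl | hm'
    · exact retractOf_biprod_left _ _
    · exact retractOf_trans (ih hm') (retractOf_biprod_right _ _)

lemma fold_addObj_mem : ∀ (l : List C) {m : C}, m ∈ l → addObj (l.foldr (· ⊞ ·) 0) m := by
  intro l
  induction l with
  | nil => intro m hm; simp at hm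
  | cons a t ih =>
    intro m hm
    rcases List.mem_cons.mp hm with rfl | hm'
    · exact addObj_biprod_left _ _
    · exact addObj_trans (addObj_biprod_right a _) (ih hm')

lemma addObj_fold_of_forall {T : C} : ∀ (l : List C), (∀ m ∈ l, addObj T m) →
    addObj T (l.foldr (· ⊞ ·) 0) := by
  intro l
  induction l with
  | nil => intro _; exact (addSub_addObj T).zero
  | cons a t ih =>
    intro h
    exact (addSub_addObj T).biprod _ _ (h a (by simp)) (ih fun m hm => h m (by simp [hm]))

lemma retract_addObj_KS (hKS : KrullSchmidt (C := C)) {X T : C} (h : RetractOf X T)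
    (hX : IsLocalRing (End X)) : addObj T X := by
  obtain ⟨l, hl, ⟨e⟩⟩ := hKS T
  obtain ⟨m, hm, hr⟩ := retract_fold_member hX l (retractOf_trans h (retractOf_of_iso e))
  obtain ⟨em⟩ := iso_of_retract_local hr hX (hl m hm)
  have h1 : addObj T m :=
    addObj_trans (T := l.foldr (· ⊞ ·) 0) (addObj_iso e (addObj_self T)) (fold_addObj_mem l hm)
  exact addObj_iso em.symm h1

end Toolkit3




section Toolkit4
set_option linter.unusedSectionVars false

/-! ### t-structure lemmas -/

/-- The aisle of a t-structure is closed under retracts. -/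
lemma IsTStr.retract {L G : C → Prop} (ht : IsTStr L G) {W X : C} (hW : L W)
    (hr : RetractOf X W) : L X := by
  obtain ⟨A, B, f, g, h, hT, hA, hB⟩ := ht.trunc X
  obtain ⟨s, p, hsp⟩ := hr
  have hg : g = 0 := by
    have hpg : p ≫ g = 0 := ht.homZero hW hB (p ≫ g)
    calc g = s ≫ (p ≫ g) := by rw [← Category.assoc, hsp, Category.id_comp]
    _ = 0 := by rw [hpg, comp_zero]
  have hBzero : IsZero B := by
    rw [IsZero.iff_id_eq_zero]
    obtain ⟨ψ, hψ⟩ : ∃ ψ : A⟦(1:ℤ)⟧ ⟶ B, 𝟙 B = h ≫ ψ :=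
      Triangle.yoneda_exact₂ _ (rot_of_distTriang _ hT) (𝟙 B)
      (by show g ≫ 𝟙 B = 0; rw [hg, zero_comp])
    rw [hψ, ht.homZero (ht.shiftL hA) hB ψ, comp_zero]
  have : IsIso f :=
    (Triangle.isZero₃_iff_isIso₁ _ hT).mp hBzero
  exact ht.isoL (asIso f) hA

/-- Uniqueness of the coaisle truncation of a t-structure. -/
lemma IsTStr.trunc_unique {L G : C → Prop} (ht : IsTStr L G) {X A B A' B' : C}
    {f : A ⟶ X} {g : X ⟶ B} {h : B ⟶ A⟦(1:ℤ)⟧} {f' : A' ⟶ X} {g' : X ⟶ B'}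
    {h' : B' ⟶ A'⟦(1:ℤ)⟧} (hT : Triangle.mk f g h ∈ distTriang C)
    (hT' : Triangle.mk f' g' h' ∈ distTriang C) (hA : L A) (hB : G B) (hA' : L A')
    (hB' : G B') : ∃ e : B ≅ B', g ≫ e.hom = g' := by
  obtain ⟨φ, hφ⟩ : ∃ φ : B ⟶ B', g' = g ≫ φ :=
    Triangle.yoneda_exact₂ _ hT g' (ht.homZero hA hB' (f ≫ g'))
  obtain ⟨ψ, hψ⟩ : ∃ ψ : B' ⟶ B, g = g' ≫ ψ :=
    Triangle.yoneda_exact₂ _ hT' g (ht.homZero hA' hB (f' ≫ g))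
  have hφψ : φ ≫ ψ = 𝟙 B := by
    have h1 : g ≫ (φ ≫ ψ - 𝟙 B) = 0 := by
      rw [Preadditive.comp_sub, ← Category.assoc, ← hφ, ← hψ, Category.comp_id, sub_self]
    obtain ⟨ν, hν⟩ : ∃ ν : A⟦(1:ℤ)⟧ ⟶ B, φ ≫ ψ - 𝟙 B = h ≫ ν :=
      Triangle.yoneda_exact₂ _ (rot_of_distTriang _ hT) (φ ≫ ψ - 𝟙 B) h1
    have : φ ≫ ψ - 𝟙 B = 0 := by
      rw [hν, ht.homZero (ht.shiftL hA) hB ν, comp_zero]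
    rw [← sub_eq_zero]; exact this
  have hψφ : ψ ≫ φ = 𝟙 B' := by
    have h1 : g' ≫ (ψ ≫ φ - 𝟙 B') = 0 := by
      rw [Preadditive.comp_sub, ← Category.assoc, ← hψ, ← hφ, Category.comp_id, sub_self]
    obtain ⟨ν, hν⟩ : ∃ ν : A'⟦(1:ℤ)⟧ ⟶ B', ψ ≫ φ - 𝟙 B' = h' ≫ ν :=
      Triangle.yoneda_exact₂ _ (rot_of_distTriang _ hT') (ψ ≫ φ - 𝟙 B') h1
    have : ψ ≫ φ - 𝟙 B' = 0 := by
      rw [hν, ht.homZero (ht.shiftL hA') hB' ν, comp_zero]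
    rw [← sub_eq_zero]; exact this
  exact ⟨⟨φ, ψ, hφψ, hψφ⟩, hφ.symm⟩

/-! ### Lift packages coming from triangles -/

lemma pkg_fac_of_triangle {T : Triangle C} (hT : T ∈ distTriang C) (X₀ : C)
    (f : X₀ ⟶ T.obj₃) (hf : NoHom X₀ (T.obj₁⟦(1:ℤ)⟧)) : ∃ g, g ≫ T.mor₂ = f := by
  obtain ⟨g, hg⟩ := Triangle.coyoneda_exact₂ _ (rot_of_distTriang _ hT) f (by
    exact hf _)
  exact ⟨g, hg.symm⟩

lemma pkg_fib_of_triangle {T : Triangle C} (hT : T ∈ distTriang C) (X₀ : C)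
    (f : X₀ ⟶ T.obj₂) (hf : f ≫ T.mor₂ = 0) : ∃ ε, ε ≫ T.mor₁ = f := by
  obtain ⟨ε, hε⟩ := Triangle.coyoneda_exact₂ _ hT f hf
  exact ⟨ε, hε.symm⟩

end Toolkit4

section Toolkit5
set_option linter.unusedSectionVars false

variable {k : Type w} [Field k] [Linear k C]

/-! ### Right approximations by `add M` -/

lemma approx_list (M X : C) : ∀ (L : List (M ⟶ X)), ∃ (E : C), addObj M E ∧
    ∃ q : E ⟶ X, ∀ φ : M ⟶ X, φ ∈ Submodule.span k {f : M ⟶ X | f ∈ L} →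
      ∃ χ : M ⟶ E, χ ≫ q = φ := by
  intro L
  induction L with
  | nil =>
    refine ⟨0, (addSub_addObj M).zero, 0, ?_⟩
    intro φ hφ
    have hempty : {f : M ⟶ X | f ∈ ([] : List (M ⟶ X))} = (∅ : Set (M ⟶ X)) := by
      ext f; simp
    rw [hempty, Submodule.span_empty, Submodule.mem_bot] at hφ
    exact ⟨0, by rw [hφ, zero_comp]⟩
  | cons g L ih =>
    obtain ⟨E, hE, q, hq⟩ := ih
    refine ⟨M ⊞ E, (addSub_addObj M).biprod M E (addObj_self M) hE, biprod.desc g q, ?_⟩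
    intro φ hφ
    have hins : {f : M ⟶ X | f ∈ (g :: L : List (M ⟶ X))} =
        insert g {f : M ⟶ X | f ∈ L} := by
      ext f; simp [List.mem_cons]
    rw [hins, Submodule.mem_span_insert] at hφ
    obtain ⟨c, z, hz, rfl⟩ := hφ
    obtain ⟨χ, hχ⟩ := hq z hz
    refine ⟨biprod.lift (c • 𝟙 M) χ, ?_⟩
    rw [biprod.lift_desc, hχ, Linear.smul_comp, Category.id_comp]

lemma approx (hfin : HomFinite (C := C) k) (M X : C) : ∃ (E : C), addObj M E ∧
    ∃ q : E ⟶ X, ∀ φ : M ⟶ X, ∃ χ : M ⟶ E, χ ≫ q = φ := by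
  haveI := hfin M X
  obtain ⟨S, hS⟩ := Module.finite_def.mp (hfin M X)
  obtain ⟨E, hE, q, hq⟩ := approx_list (k := k) M X S.toList
  refine ⟨E, hE, q, fun φ => hq φ ?_⟩
  have : {f : M ⟶ X | f ∈ S.toList} = (S : Set (M ⟶ X)) := by
    ext f; simp [Finset.mem_toList]
  rw [this, hS]
  trivial

/-! ### The coheart lemma: `susp M ∩ ⊥(>0) M ⊆ add M` -/

lemma coheart (hfin : HomFinite (C := C) k) (hKS : KrullSchmidt (C := C))
    {M : C} (hM : PartialSilting M) {X : C} (hX : suspObj M X)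
    (hXp : ∀ i : ℤ, 0 < i → NoHom X (M⟦i⟧)) (hloc : IsLocalRing (End X)) : addObj M X := by
  -- `Hom(M, E⟦i⟧) = 0` for all `i > 0` whenever `E ∈ add M`
  have presilt : ∀ i : ℤ, 0 < i → NoHom M (M⟦i⟧) := fun i hi f => hM.2 M (suspObj_self M) i hi f
  have haddperp : ∀ {E : C}, addObj M E → ∀ i : ℤ, 0 < i → NoHom M (E⟦i⟧) := by
    intro E hE
    refine addObj_min (U := fun Y => ∀ i : ℤ, 0 < i → NoHom M (Y⟦i⟧)) ⟨?_, ?_, ?_, ?_⟩ presilt hE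
    · exact fun Y Y' e h i hi => noHom_tgt_iso ((CategoryTheory.shiftFunctor C i).mapIso e) (h i hi)
    · exact fun i _ =>
        noHom_tgt_isZero ((CategoryTheory.shiftFunctor C i).map_isZero (isZero_zero C))
    · exact fun A B hA hB i hi => noHom_shift_biprod_tgt i (hA i hi) (hB i hi)
    · exact fun A B h i hi => noHom_shift_of_biprod_tgt₁ i (h i hi)
  obtain ⟨E, hE, q, hq⟩ := approx (k := k) hfin M X
  obtain ⟨D, e, d, hTD⟩ := distinguished_cocone_triangle q
  -- `Hom(M, D⟦i⟧) = 0` for `i ≥ 0`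
  have hMXpos : ∀ i : ℤ, 0 < i → NoHom M (X⟦i⟧) := fun i hi f => hM.2 X hX i hi f
  have hMDpos : ∀ i : ℤ, 0 < i → NoHom M (D⟦i⟧) := by
    intro i hi
    exact noHom_ext₃_tgt (Triangle.shift_distinguished _ hTD i) (hMXpos i hi)
      (noHom_tgt_shift_shift i 1 (i+1) rfl (haddperp hE (i+1) (by omega)))
  have hMD0 : NoHom M D := by
    intro φ
    obtain ⟨ψ, hψ⟩ : ∃ ψ : M ⟶ X, φ = ψ ≫ e :=
      Triangle.coyoneda_exact₃ _ hTD φ (haddperp hE 1 one_pos (φ ≫ d))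
    obtain ⟨χ, hχ⟩ := hq ψ
    rw [hψ, ← hχ, Category.assoc]
    have : q ≫ e = 0 := comp_distTriang_mor_zero₁₂ _ hTD
    rw [this, comp_zero]
  have hMDnn : ∀ i : ℤ, 0 ≤ i → NoHom M (D⟦i⟧) := by
    intro i hi
    rcases lt_or_eq_of_le hi with h | h
    · exact hMDpos i h
    · subst h
      exact noHom_shift_zero' hMD0
  -- truncate `N = D⟦-1⟧`
  obtain ⟨AN, BN, fN, gN, hN, hTN, hAN, hBN⟩ := hM.1.trunc (D⟦(-1:ℤ)⟧)
  have hBNall : ∀ n : ℤ, NoHom M (BN⟦n⟧) := by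
    intro n
    rcases le_or_gt n 0 with hn | hn
    · exact fun f => hBN n hn f
    · refine noHom_ext₃_tgt (Triangle.shift_distinguished _ hTN n) ?_ ?_
      · exact noHom_tgt_shift_shift (-1) n (n-1) (by ring) (hMDnn (n-1) (by omega))
      · exact noHom_tgt_shift_shift n 1 (n+1) rfl
          (noHom_tgt_shift_shift' (n+1) 0 (n+1) (by ring)
            (noHom_shift_zero' (fun f => hM.2 AN hAN (n+1) (by omega) f)))
  -- `Hom(X, D) = 0`
  have hXAN1 : NoHom X (AN⟦(1:ℤ)⟧) := susp_noHom_tgt_pos hXp hAN 1 one_pos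
  have hXBN1 : NoHom X (BN⟦(1:ℤ)⟧) := susp_noHom_src_all hBNall hX 1
  have hXN1 : NoHom X ((D⟦(-1:ℤ)⟧)⟦(1:ℤ)⟧) :=
    noHom_ext₂_tgt (Triangle.shift_distinguished _ hTN 1) hXAN1 hXBN1
  have hXD : NoHom X D :=
    noHom_shift_zero (noHom_tgt_shift_shift' (-1) 1 0 (by ring) hXN1)
  -- hence `q` splits and `X` is a retract of `E`, so of `M`
  obtain ⟨s, hs⟩ : ∃ s : X ⟶ E, 𝟙 X = s ≫ q :=
    Triangle.coyoneda_exact₂ _ hTD (𝟙 X) (by show 𝟙 X ≫ e = 0; rw [hXD e, comp_zero])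
  obtain ⟨lE, hlE⟩ := addObj_pairs hE
  have hsum : (lE.map fun x => s ≫ (x.1 ≫ x.2) ≫ q).sum = 𝟙 X := by
    rw [list_map_sum_conj lE s q (fun x => x.1 ≫ x.2), hlE]
    simpa using hs.symm
  obtain ⟨t, ht, hut⟩ := exists_isUnit_end_of_sum hloc _ hsum
  obtain ⟨x, _, hxt⟩ := List.mem_map.mp ht
  have hres : (s ≫ x.1) ≫ (x.2 ≫ q) = t := by
    rw [← hxt]; simp only [Category.assoc]
  refine retract_addObj_KS hKS (retract_of_isUnit (s ≫ x.1) (x.2 ≫ q) ?_) hloc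
  rw [show toEnd ((s ≫ x.1) ≫ (x.2 ≫ q)) = toEnd t from congrArg toEnd hres]
  exact hut

end Toolkit5

section Toolkit6
set_option linter.unusedSectionVars false

variable {k : Type w} [Field k] [Linear k C]

/-- Uniqueness of lifts along silting reduction, up to `add M`-summands (one direction):
if `Y` and `Y'` are lifts of additively equivalent bases `Z`, `Z'` along the
partial silting object `M`, then `Y ∈ add (M ⊞ Y')`. -/
lemma liftUnique (hfin : HomFinite (C := C) k) (hKS : KrullSchmidt (C := C))
    {M Y Z Y' Z' M₀ M₀' : C} (hM : PartialSilting M)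
    (aY : M₀ ⟶ Y) (bY : Y ⟶ Z) (hM₀ : suspObj M M₀)
    (facb : ∀ (X₀ : C) (f : X₀ ⟶ Z), NoHom X₀ (M₀⟦(1:ℤ)⟧) → ∃ g, g ≫ bY = f)
    (faca : ∀ (X₀ : C) (f : X₀ ⟶ Y), f ≫ bY = 0 → ∃ ε, ε ≫ aY = f)
    (hY : ∀ i : ℤ, 0 < i → NoHom Y (M⟦i⟧))
    (bY' : Y' ⟶ Z') (hM₀' : suspObj M M₀')
    (facb' : ∀ (X₀ : C) (f : X₀ ⟶ Z'), NoHom X₀ (M₀'⟦(1:ℤ)⟧) → ∃ g, g ≫ bY' = f)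
    (hY' : ∀ i : ℤ, 0 < i → NoHom Y' (M⟦i⟧))
    (hZZ' : addObj Z' Z) :
    addObj (M ⊞ Y') Y := by
  have hYM₀' : NoHom Y (M₀'⟦(1:ℤ)⟧) := susp_noHom_tgt_pos hY hM₀' 1 one_pos
  have hY'M₀ : NoHom Y' (M₀⟦(1:ℤ)⟧) := susp_noHom_tgt_pos hY' hM₀ 1 one_pos
  obtain ⟨lZ, hlZ⟩ := addObj_pairs hZZ'
  have lifts : ∀ qq : (Z ⟶ Z') × (Z' ⟶ Z), ∃ rr : (Y ⟶ Y') × (Y' ⟶ Y),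
      rr.1 ≫ bY' = bY ≫ qq.1 ∧ rr.2 ≫ bY = bY' ≫ qq.2 := by
    intro qq
    obtain ⟨r1, hr1⟩ := facb' Y (bY ≫ qq.1) hYM₀'
    obtain ⟨r2, hr2⟩ := facb Y' (bY' ≫ qq.2) hY'M₀
    exact ⟨(r1, r2), hr1, hr2⟩
  choose rr hrr1 hrr2 using lifts
  set ρ : Y ⟶ Y := (lZ.map fun qq => (rr qq).1 ≫ (rr qq).2).sum with hρ
  have hρb : ρ ≫ bY = bY := by
    rw [hρ, list_sum_comp, List.map_map]
    have heq : ((· ≫ bY) ∘ fun qq => (rr qq).1 ≫ (rr qq).2) =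
        (fun qq : (Z ⟶ Z') × (Z' ⟶ Z) => bY ≫ (qq.1 ≫ qq.2)) := by
      funext qq
      show ((rr qq).1 ≫ (rr qq).2) ≫ bY = _
      rw [Category.assoc, hrr2, ← Category.assoc, hrr1, Category.assoc]
    rw [heq]
    have h2 : (lZ.map fun qq : (Z ⟶ Z') × (Z' ⟶ Z) => bY ≫ (qq.1 ≫ qq.2)).sum =
        bY ≫ (lZ.map fun qq => qq.1 ≫ qq.2).sum := by
      rw [list_comp_sum, List.map_map]
      rfl
    rw [h2, hlZ, Category.comp_id]
  obtain ⟨ε, hε⟩ := faca Y (𝟙 Y - ρ)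
    (by rw [Preadditive.sub_comp, Category.id_comp, hρb, sub_self])
  obtain ⟨lY, hlY, ⟨eY⟩⟩ := hKS Y
  refine addObj_iso eY.symm (addObj_fold_of_forall lY ?_)
  intro X hXl
  have hlocX := hlY X hXl
  have hretr : RetractOf X Y :=
    retractOf_trans (mem_retract_fold lY hXl) (retractOf_of_iso eY.symm)
  obtain ⟨u, v, huv⟩ := hretr
  have hXperp : ∀ i : ℤ, 0 < i → NoHom X (M⟦i⟧) :=
    fun i hi => noHom_src_retract ⟨u, v, huv⟩ (hY i hi)
  -- identity decomposition on `X`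
  set L : List (X ⟶ X) :=
    (lZ.map fun qq => u ≫ ((rr qq).1 ≫ (rr qq).2) ≫ v) ++ [u ≫ (ε ≫ aY) ≫ v] with hL
  have hsum : L.sum = 𝟙 X := by
    rw [hL, List.sum_append, list_map_sum_conj lZ u v (fun qq => (rr qq).1 ≫ (rr qq).2), ← hρ]
    have : ρ ≫ v + (ε ≫ aY) ≫ v = 𝟙 Y ≫ v := by
      rw [← Preadditive.add_comp, hε]
      congr 1
      abel
    calc u ≫ ρ ≫ v + List.sum [u ≫ (ε ≫ aY) ≫ v]
        = u ≫ (ρ ≫ v + (ε ≫ aY) ≫ v) := by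
          simp [Preadditive.comp_add]
    _ = u ≫ 𝟙 Y ≫ v := by rw [this]
    _ = 𝟙 X := by rw [Category.id_comp, huv]
  obtain ⟨t, ht, hut⟩ := exists_isUnit_end_of_sum hlocX L hsum
  rw [hL, List.mem_append] at ht
  rcases ht with ht | ht
  · -- `X` is a retract of `Y'`
    obtain ⟨qq, _, hqt⟩ := List.mem_map.mp ht
    have hres : (u ≫ (rr qq).1) ≫ ((rr qq).2 ≫ v) = t := by
      rw [← hqt]; simp only [Category.assoc]
    have : RetractOf X Y' := retract_of_isUnit _ _ (by
      rw [show toEnd ((u ≫ (rr qq).1) ≫ ((rr qq).2 ≫ v)) = toEnd t from congrArg toEnd hres]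
      exact hut)
    exact addObj_trans (addObj_biprod_right M Y') (retract_addObj_KS hKS this hlocX)
  · -- `X` lies in `add M`
    have hteq : t = u ≫ (ε ≫ aY) ≫ v := by
      simpa using ht
    have hres : (u ≫ ε) ≫ (aY ≫ v) = t := by
      rw [hteq]; simp only [Category.assoc]
    have hrM₀ : RetractOf X M₀ := retract_of_isUnit _ _ (by
      rw [show toEnd ((u ≫ ε) ≫ (aY ≫ v)) = toEnd t from congrArg toEnd hres]
      exact hut)
    have hXsusp : suspObj M X := IsTStr.retract hM.1 hM₀ hrM₀
    exact addObj_trans (addObj_biprod_left M Y')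
      (coheart (k := k) hfin hKS hM hXsusp hXperp hlocX)

end Toolkit6

section Toolkit7
set_option linter.unusedSectionVars false

/-- Statement 14, part (1), as a standalone lemma, together with the compatibility
of the obtained isomorphism with the truncation maps. -/
lemma part1core (P Q Q' : C) (hP : PartialSilting P) (hQ : PartialSilting Q)
    (hPQ' : PartialSilting (P ⊞ Q')) (hQperp : perpZ P Q)
    (P₀ : C) (a : P₀ ⟶ Q') (b : Q' ⟶ Q) (c : Q ⟶ P₀⟦(1:ℤ)⟧)
    (hTr : Triangle.mk a b c ∈ distTriang C) (hP₀ : suspObj P P₀)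
    (hQ' : leftPerpGt0 P Q')
    (X B B₂ B₃ A : C) (f : A ⟶ X) (g : X ⟶ B) (h : B ⟶ A⟦(1:ℤ)⟧)
    (hTX : Triangle.mk f g h ∈ distTriang C) (hA : suspObj P A) (hB : perpLe P 0 B)
    (A₂ : C) (f₂ : A₂ ⟶ B) (g₂ : B ⟶ B₂) (h₂ : B₂ ⟶ A₂⟦(1:ℤ)⟧)
    (hT2 : Triangle.mk f₂ g₂ h₂ ∈ distTriang C) (hA₂ : suspObj Q A₂) (hB₂ : perpLe Q 0 B₂)
    (A₃ : C) (f₃ : A₃ ⟶ X) (g₃ : X ⟶ B₃) (h₃ : B₃ ⟶ A₃⟦(1:ℤ)⟧)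
    (hT3 : Triangle.mk f₃ g₃ h₃ ∈ distTriang C) (hA₃ : suspObj (P ⊞ Q') A₃)
    (hB₃ : perpLe (P ⊞ Q') 0 B₃) :
    ∃ e : B₂ ≅ B₃, (g ≫ g₂) ≫ e.hom = g₃ := by
  have ht := hPQ'.1
  have hPL : suspObj (P ⊞ Q') P :=
    IsTStr.retract ht (suspObj_self _) ⟨biprod.inl, biprod.fst, biprod.inl_fst⟩
  have hQ'L : suspObj (P ⊞ Q') Q' :=
    IsTStr.retract ht (suspObj_self _) ⟨biprod.inr, biprod.snd, biprod.inr_snd⟩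
  have suspPL : ∀ {Xx : C}, suspObj P Xx → suspObj (P ⊞ Q') Xx :=
    fun hXx => suspObj_min (suspended_suspObj _) hPL hXx
  have hQL : suspObj (P ⊞ Q') Q :=
    (suspended_suspObj (P ⊞ Q')).ext _ (rot_of_distTriang _ hTr) hQ'L
      ((suspended_suspObj _).shift (suspPL hP₀))
  have suspQL : ∀ {Xx : C}, suspObj Q Xx → suspObj (P ⊞ Q') Xx :=
    fun hXx => suspObj_min (suspended_suspObj _) hQL hXx
  -- `B₂` lies in the coaisle of the t-structure attached to `P ⊞ Q'`
  have hB₂P : ∀ i : ℤ, i ≤ 0 → NoHom P (B₂⟦i⟧) := by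
    intro i hi
    refine noHom_ext₃_tgt (Triangle.shift_distinguished _ hT2 i) (fun ff => hB i hi ff) ?_
    exact noHom_tgt_shift_shift i 1 (i+1) rfl
      (susp_noHom_tgt_all (fun n ff => hQperp n ff) hA₂ (i+1))
  have hB₂Q' : ∀ i : ℤ, i ≤ 0 → NoHom Q' (B₂⟦i⟧) := by
    intro i hi
    exact noHom_ext₂_src hTr (susp_noHom_src_le hB₂P hP₀ i hi) (fun ff => hB₂ i hi ff)
  have hB₂G : perpLe (P ⊞ Q') 0 B₂ :=
    fun i hi => noHom_biprod_src (hB₂P i hi) (hB₂Q' i hi)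
  -- construct mutually inverse maps
  obtain ⟨φ₁, hφ₁⟩ : ∃ φ₁ : B ⟶ B₃, g₃ = g ≫ φ₁ :=
    Triangle.yoneda_exact₂ _ hTX g₃ (ht.homZero (suspPL hA) hB₃ (f ≫ g₃))
  obtain ⟨φ, hφ⟩ : ∃ φ : B₂ ⟶ B₃, φ₁ = g₂ ≫ φ :=
    Triangle.yoneda_exact₂ _ hT2 φ₁ (ht.homZero (suspQL hA₂) hB₃ (f₂ ≫ φ₁))
  obtain ⟨ψ, hψ⟩ : ∃ ψ : B₃ ⟶ B₂, g ≫ g₂ = g₃ ≫ ψ :=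
    Triangle.yoneda_exact₂ _ hT3 (g ≫ g₂) (ht.homZero hA₃ hB₂G (f₃ ≫ (g ≫ g₂)))
  have hcomp : (g ≫ g₂) ≫ φ = g₃ := by
    rw [Category.assoc, ← hφ, ← hφ₁]
  have hφψ : φ ≫ ψ = 𝟙 B₂ := by
    have hμ : g ≫ (g₂ ≫ (φ ≫ ψ) - g₂) = 0 := by
      rw [Preadditive.comp_sub]
      have e1 : g ≫ g₂ ≫ (φ ≫ ψ) = g ≫ g₂ := by
        calc g ≫ g₂ ≫ (φ ≫ ψ) = ((g ≫ g₂) ≫ φ) ≫ ψ := by simp only [Category.assoc]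
        _ = g₃ ≫ ψ := by rw [hcomp]
        _ = g ≫ g₂ := hψ.symm
      rw [e1, sub_self]
    obtain ⟨ν, hν⟩ : ∃ ν : A⟦(1:ℤ)⟧ ⟶ B₂, g₂ ≫ (φ ≫ ψ) - g₂ = h ≫ ν :=
      Triangle.yoneda_exact₂ _ (rot_of_distTriang _ hTX) _ hμ
    have hν0 : ν = 0 := ht.homZero ((suspended_suspObj _).shift (suspPL hA)) hB₂G ν
    have h1 : g₂ ≫ (φ ≫ ψ - 𝟙 B₂) = 0 := by
      rw [Preadditive.comp_sub, Category.comp_id]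
      rw [hν, hν0, comp_zero]
    obtain ⟨ν₂, hν₂⟩ : ∃ ν₂ : A₂⟦(1:ℤ)⟧ ⟶ B₂, φ ≫ ψ - 𝟙 B₂ = h₂ ≫ ν₂ :=
      Triangle.yoneda_exact₂ _ (rot_of_distTriang _ hT2) _ h1
    have hν₂0 : ν₂ = 0 := ht.homZero ((suspended_suspObj _).shift (suspQL hA₂)) hB₂G ν₂
    rw [hν₂0, comp_zero] at hν₂
    exact sub_eq_zero.mp hν₂
  have hψφ : ψ ≫ φ = 𝟙 B₃ := by
    have h3 : g₃ ≫ (ψ ≫ φ - 𝟙 B₃) = 0 := by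
      rw [Preadditive.comp_sub, Category.comp_id]
      have e1 : g₃ ≫ ψ ≫ φ = g₃ := by
        calc g₃ ≫ ψ ≫ φ = (g₃ ≫ ψ) ≫ φ := by simp only [Category.assoc]
        _ = (g ≫ g₂) ≫ φ := by rw [← hψ]
        _ = g₃ := hcomp
      rw [e1, sub_self]
    obtain ⟨ν₃, hν₃⟩ : ∃ ν₃ : A₃⟦(1:ℤ)⟧ ⟶ B₃, ψ ≫ φ - 𝟙 B₃ = h₃ ≫ ν₃ :=
      Triangle.yoneda_exact₂ _ (rot_of_distTriang _ hT3) _ h3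
    have hν₃0 : ν₃ = 0 := ht.homZero ((suspended_suspObj _).shift hA₃) hB₃ ν₃
    rw [hν₃0, comp_zero] at hν₃
    exact sub_eq_zero.mp hν₃
  exact ⟨⟨φ, ψ, hφψ, hψφ⟩, hcomp⟩

end Toolkit7
/-- In the setting of iterated silting reduction, the truncation functors
satisfy `σ^{>0}_{σ_P^{-1}(Q)} ≅ σ^{>0}_Q ∘ σ^{>0}_P` (expressed objectwise via truncation
triangles), and consequently the composition rule `(Q, P) ↦ σ_P^{-1}(Q)` of the τ-cluster
morphism category is associative: `R ∘ (Q ∘ P) = (R ∘ Q) ∘ P`, i.e. the two composites agree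
up to additive equivalence. -/
theorem statement14 {k : Type w} [Field k] [Linear k C] (hfin : HomFinite (C := C) k)
    (hKS : KrullSchmidt (C := C)) (S : C) (hS : BoundedSilting S)
    (P Q Q' : C) (hP : PartialSilting P) (hQ : PartialSilting Q)
    (hPQ' : PartialSilting (P ⊞ Q')) (h2P : TwoTerm S P)
    (hQperp : perpZ P Q)
    -- `Q' = σ_P^{-1}(Q)`-component: a truncation triangle `P₀ → Q' → Q → ΣP₀`
    (P₀ : C) (a : P₀ ⟶ Q') (b : Q' ⟶ Q) (c : Q ⟶ P₀⟦(1:ℤ)⟧)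
    (hTr : Triangle.mk a b c ∈ (distTriang C)) (hP₀ : suspObj P P₀)
    (hQ' : leftPerpGt0 P Q') :
    -- (1) `σ_{P ⊞ Q'} ≅ σ_Q ∘ σ_P` on every object
    (∀ (X B B₂ B₃ A : C) (f : A ⟶ X) (g : X ⟶ B) (h : B ⟶ A⟦(1:ℤ)⟧),
      Triangle.mk f g h ∈ (distTriang C) → suspObj P A → perpLe P 0 B →
      ∀ (A₂ : C) (f₂ : A₂ ⟶ B) (g₂ : B ⟶ B₂) (h₂ : B₂ ⟶ A₂⟦(1:ℤ)⟧),
        Triangle.mk f₂ g₂ h₂ ∈ (distTriang C) → suspObj Q A₂ → perpLe Q 0 B₂ →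
      ∀ (A₃ : C) (f₃ : A₃ ⟶ X) (g₃ : X ⟶ B₃) (h₃ : B₃ ⟶ A₃⟦(1:ℤ)⟧),
        Triangle.mk f₃ g₃ h₃ ∈ (distTriang C) → suspObj (P ⊞ Q') A₃ →
        perpLe (P ⊞ Q') 0 B₃ →
      Nonempty (B₂ ≅ B₃)) ∧
    -- (2) associativity of the composition rule
    (∀ R R₁ R₂ W : C, perpZ P R → perpZ Q R →
      -- `R₁` is the lift of `R` along `P ⊞ Q'`
      (∃ (T₀ : C) (a₁ : T₀ ⟶ R₁) (b₁ : R₁ ⟶ R) (c₁ : R ⟶ T₀⟦(1:ℤ)⟧),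
        Triangle.mk a₁ b₁ c₁ ∈ (distTriang C) ∧ suspObj (P ⊞ Q') T₀ ∧
        leftPerpGt0 (P ⊞ Q') R₁) →
      -- `R₂` is the lift of `R` along `Q`
      (∃ (Q₀ : C) (a₂ : Q₀ ⟶ R₂) (b₂ : R₂ ⟶ R) (c₂ : R ⟶ Q₀⟦(1:ℤ)⟧),
        Triangle.mk a₂ b₂ c₂ ∈ (distTriang C) ∧ suspObj Q Q₀ ∧ leftPerpGt0 Q R₂) →
      -- `W` is the lift of `Q ⊞ R₂` along `P`
      (∃ (P₁ : C) (a₃ : P₁ ⟶ W) (b₃ : W ⟶ Q ⊞ R₂) (c₃ : Q ⊞ R₂ ⟶ P₁⟦(1:ℤ)⟧),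
        Triangle.mk a₃ b₃ c₃ ∈ (distTriang C) ∧ suspObj P P₁ ∧ leftPerpGt0 P W) →
      ∀ X : C, addObj ((P ⊞ Q') ⊞ R₁) X ↔ addObj (P ⊞ W) X) := by
  constructor
  · -- part (1)
    intro X B B₂ B₃ A f g h hTX hA hB A₂ f₂ g₂ h₂ hT2 hA₂ hB₂ A₃ f₃ g₃ h₃ hT3 hA₃ hB₃
    obtain ⟨e, -⟩ := part1core P Q Q' hP hQ hPQ' hQperp P₀ a b c hTr hP₀ hQ'
      X B B₂ B₃ A f g h hTX hA hB A₂ f₂ g₂ h₂ hT2 hA₂ hB₂ A₃ f₃ g₃ h₃ hT3 hA₃ hB₃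
    exact ⟨e⟩
  · -- part (2)
    intro R R₁ R₂ W hRP hRQ h1 h2 h3
    obtain ⟨T₀, a₁, b₁, c₁, hT₁, hT₀, hR₁perp⟩ := h1
    obtain ⟨Q₀, a₂, b₂, c₂, hT₂r, hQ₀, hR₂perp⟩ := h2
    obtain ⟨P₁, a₃, b₃, c₃, hT₃r, hP₁, hWperp⟩ := h3
    have ht := hPQ'.1
    have hPL : suspObj (P ⊞ Q') P :=
      IsTStr.retract ht (suspObj_self _) ⟨biprod.inl, biprod.fst, biprod.inl_fst⟩
    have hQ'L : suspObj (P ⊞ Q') Q' :=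
      IsTStr.retract ht (suspObj_self _) ⟨biprod.inr, biprod.snd, biprod.inr_snd⟩
    have suspPL : ∀ {Xx : C}, suspObj P Xx → suspObj (P ⊞ Q') Xx :=
      fun hXx => suspObj_min (suspended_suspObj _) hPL hXx
    have hQL : suspObj (P ⊞ Q') Q :=
      (suspended_suspObj (P ⊞ Q')).ext _ (rot_of_distTriang _ hTr) hQ'L
        ((suspended_suspObj _).shift (suspPL hP₀))
    -- the truncations `Y* = σ_P^{>0} R₁` and `σ_Q^{>0} Y*`
    obtain ⟨Astar, Ystar, fs, gs, hs, hTs, hAs, hYs⟩ := hP.1.trunc R₁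
    obtain ⟨A₂, B₂, f₂, g₂, h₂, hT2, hA₂, hB₂⟩ := hQ.1.trunc Ystar
    -- `R` lies in the coaisle for `P ⊞ Q'`
    have hRPn : ∀ n : ℤ, NoHom P (R⟦n⟧) := fun n ff => hRP n ff
    have hRQn : ∀ n : ℤ, NoHom Q (R⟦n⟧) := fun n ff => hRQ n ff
    have hRQ'n : ∀ n : ℤ, NoHom Q' (R⟦n⟧) := fun n =>
      noHom_ext₂_src hTr (susp_noHom_src_all hRPn hP₀ n) (hRQn n)
    have hRG : perpLe (P ⊞ Q') 0 R := fun i _ => noHom_biprod_src (hRPn i) (hRQ'n i)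
    -- part (1) applied to `R₁` gives `σ_Q^{>0} σ_P^{>0} R₁ ≅ R`
    obtain ⟨eB₂R, heB₂R⟩ := part1core P Q Q' hP hQ hPQ' hQperp P₀ a b c hTr hP₀ hQ'
      R₁ Ystar B₂ R Astar fs gs hs hTs hAs hYs A₂ f₂ g₂ h₂ hT2 hA₂ hB₂
      T₀ a₁ b₁ c₁ hT₁ hT₀ hRG
    -- `Y*` is a lift of `R` along `Q`
    have hR₁p : ∀ i : ℤ, 0 < i → NoHom R₁ ((P ⊞ Q')⟦i⟧) := fun i hi ff => hR₁perp i hi ff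
    have hR₁Q : ∀ i : ℤ, 0 < i → NoHom R₁ (Q⟦i⟧) :=
      fun i hi => susp_noHom_tgt_pos hR₁p hQL i hi
    have hYsQ : ∀ i : ℤ, 0 < i → NoHom Ystar (Q⟦i⟧) := by
      intro i hi
      refine noHom_ext₃_src hTs (hR₁Q i hi) ?_
      exact noHom_shift_src (i-1) 1 i (by ring)
        (susp_noHom_src_all (fun n ff => hQperp n ff) hAs (i-1))
    have facbY : ∀ (X₀ : C) (ff : X₀ ⟶ R), NoHom X₀ (A₂⟦(1:ℤ)⟧) →
        ∃ gg, gg ≫ (g₂ ≫ eB₂R.hom) = ff := by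
      intro X₀ ff hff
      obtain ⟨gg, hgg⟩ : ∃ gg : X₀ ⟶ Ystar, gg ≫ g₂ = ff ≫ eB₂R.inv := pkg_fac_of_triangle hT2 X₀ (ff ≫ eB₂R.inv) hff
      refine ⟨gg, ?_⟩
      have hgg' : gg ≫ g₂ = ff ≫ eB₂R.inv := hgg
      rw [← Category.assoc, hgg', Category.assoc, Iso.inv_hom_id, Category.comp_id]
    have facaY : ∀ (X₀ : C) (ff : X₀ ⟶ Ystar), ff ≫ (g₂ ≫ eB₂R.hom) = 0 →
        ∃ ε, ε ≫ f₂ = ff := by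
      intro X₀ ff hff
      have h0 : ff ≫ g₂ = 0 := by
        have hz : (ff ≫ g₂) ≫ eB₂R.hom = 0 := by
          rw [Category.assoc]; exact hff
        calc ff ≫ g₂ = ((ff ≫ g₂) ≫ eB₂R.hom) ≫ eB₂R.inv := by simp
        _ = 0 := by rw [hz, zero_comp]
      exact pkg_fib_of_triangle hT2 X₀ ff h0
    -- uniqueness of the lift along `Q`: `add (Q ⊞ R₂) = add (Q ⊞ Y*)`
    have hYsR₂ : addObj (Q ⊞ R₂) Ystar :=
      liftUnique (k := k) hfin hKS hQ f₂ (g₂ ≫ eB₂R.hom) hA₂ facbY facaY hYsQ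
        b₂ hQ₀ (fun X₀ ff hff => pkg_fac_of_triangle hT₂r X₀ ff hff)
        (fun i hi ff => hR₂perp i hi ff) (addObj_self R)
    have hR₂Ys : addObj (Q ⊞ Ystar) R₂ :=
      liftUnique (k := k) hfin hKS hQ a₂ b₂ hQ₀
        (fun X₀ ff hff => pkg_fac_of_triangle hT₂r X₀ ff hff)
        (fun X₀ ff hff => pkg_fib_of_triangle hT₂r X₀ ff hff)
        (fun i hi ff => hR₂perp i hi ff)
        (g₂ ≫ eB₂R.hom) hA₂ facbY hYsQ (addObj_self R)
    have hZ'Z : addObj (Q ⊞ Ystar) (Q ⊞ R₂) :=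
      (addSub_addObj _).biprod _ _ (addObj_biprod_left _ _) hR₂Ys
    have hZZ' : addObj (Q ⊞ R₂) (Q ⊞ Ystar) :=
      (addSub_addObj _).biprod _ _ (addObj_biprod_left _ _) hYsR₂
    -- the combined lift `Q' ⊞ R₁` of `Q ⊞ Y*` along `P`
    have hM₀' : suspObj P (P₀ ⊞ Astar) :=
      (suspended_suspObj P).ext _ (binaryBiproductTriangle_distinguished P₀ Astar) hP₀ hAs
    have facbC : ∀ (X₀ : C) (ff : X₀ ⟶ Q ⊞ Ystar), NoHom X₀ ((P₀ ⊞ Astar)⟦(1:ℤ)⟧) →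
        ∃ gg, gg ≫ biprod.map b gs = ff := by
      intro X₀ ff hff
      obtain ⟨g1, hg1⟩ : ∃ g1 : X₀ ⟶ Q', g1 ≫ b = ff ≫ biprod.fst := pkg_fac_of_triangle hTr X₀ (ff ≫ biprod.fst)
        (noHom_shift_of_biprod_tgt₁ 1 hff)
      obtain ⟨g2, hg2⟩ : ∃ g2 : X₀ ⟶ R₁, g2 ≫ gs = ff ≫ biprod.snd := pkg_fac_of_triangle hTs X₀ (ff ≫ biprod.snd)
        (noHom_shift_of_biprod_tgt₂ 1 hff)
      refine ⟨biprod.lift g1 g2, ?_⟩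
      apply biprod.hom_ext
      · rw [Category.assoc, biprod.map_fst, ← Category.assoc, biprod.lift_fst]
        exact hg1
      · rw [Category.assoc, biprod.map_snd, ← Category.assoc, biprod.lift_snd]
        exact hg2
    have facaC : ∀ (X₀ : C) (ff : X₀ ⟶ Q' ⊞ R₁), ff ≫ biprod.map b gs = 0 →
        ∃ ε, ε ≫ biprod.map a fs = ff := by
      intro X₀ ff hff
      have hff1 : (ff ≫ biprod.fst) ≫ b = 0 := by
        calc (ff ≫ biprod.fst) ≫ b = ff ≫ biprod.map b gs ≫ biprod.fst := by
              rw [Category.assoc, biprod.map_fst]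
        _ = 0 := by rw [← Category.assoc, hff, zero_comp]
      have hff2 : (ff ≫ biprod.snd) ≫ gs = 0 := by
        calc (ff ≫ biprod.snd) ≫ gs = ff ≫ biprod.map b gs ≫ biprod.snd := by
              rw [Category.assoc, biprod.map_snd]
        _ = 0 := by rw [← Category.assoc, hff, zero_comp]
      obtain ⟨e1, he1⟩ : ∃ e1 : X₀ ⟶ P₀, e1 ≫ a = ff ≫ biprod.fst := pkg_fib_of_triangle hTr X₀ (ff ≫ biprod.fst) hff1
      obtain ⟨e2, he2⟩ : ∃ e2 : X₀ ⟶ Astar, e2 ≫ fs = ff ≫ biprod.snd := pkg_fib_of_triangle hTs X₀ (ff ≫ biprod.snd) hff2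
      refine ⟨biprod.lift e1 e2, ?_⟩
      apply biprod.hom_ext
      · rw [Category.assoc, biprod.map_fst, ← Category.assoc, biprod.lift_fst]
        exact he1
      · rw [Category.assoc, biprod.map_snd, ← Category.assoc, biprod.lift_snd]
        exact he2
    have hWp : ∀ i : ℤ, 0 < i → NoHom W (P⟦i⟧) := fun i hi ff => hWperp i hi ff
    have hQ'R₁p : ∀ i : ℤ, 0 < i → NoHom (Q' ⊞ R₁) (P⟦i⟧) := by
      intro i hi
      refine noHom_biprod_src (fun ff => hQ' i hi ff) ?_
      intro ff
      have hz : ff ≫ biprod.inl⟦i⟧' = 0 := hR₁perp i hi _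
      calc ff = ff ≫ ((biprod.inl : P ⟶ P ⊞ Q') ≫ biprod.fst)⟦i⟧' := by simp
      _ = 0 := by rw [Functor.map_comp, ← Category.assoc, hz, zero_comp]
    -- uniqueness of the lift along `P`
    have hWmem : addObj (P ⊞ (Q' ⊞ R₁)) W :=
      liftUnique (k := k) hfin hKS hP a₃ b₃ hP₁
        (fun X₀ ff hff => pkg_fac_of_triangle hT₃r X₀ ff hff)
        (fun X₀ ff hff => pkg_fib_of_triangle hT₃r X₀ ff hff) hWp
        (biprod.map b gs) hM₀' facbC hQ'R₁p hZ'Z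
    have hQR₁mem : addObj (P ⊞ W) (Q' ⊞ R₁) :=
      liftUnique (k := k) hfin hKS hP (biprod.map a fs) (biprod.map b gs) hM₀' facbC facaC
        hQ'R₁p b₃ hP₁ (fun X₀ ff hff => pkg_fac_of_triangle hT₃r X₀ ff hff) hWp hZZ'
    -- conclude
    intro Xo
    have hfwd : addObj ((P ⊞ Q') ⊞ R₁) (P ⊞ W) := by
      refine (addSub_addObj _).biprod _ _ ?_ ?_
      · exact addObj_trans (addObj_biprod_left (P ⊞ Q') R₁) (addObj_biprod_left P Q')
      · refine addObj_trans (T := P ⊞ (Q' ⊞ R₁)) ?_ hWmem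
        refine (addSub_addObj _).biprod _ _ ?_ ?_
        · exact addObj_trans (addObj_biprod_left (P ⊞ Q') R₁) (addObj_biprod_left P Q')
        · exact (addSub_addObj _).biprod _ _
            (addObj_trans (addObj_biprod_left (P ⊞ Q') R₁) (addObj_biprod_right P Q'))
            (addObj_biprod_right (P ⊞ Q') R₁)
    have hbwd : addObj (P ⊞ W) ((P ⊞ Q') ⊞ R₁) := by
      refine (addSub_addObj _).biprod _ _ ?_ ?_
      · exact (addSub_addObj _).biprod _ _ (addObj_biprod_left P W)
          (addObj_trans hQR₁mem (addObj_biprod_left Q' R₁))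
      · exact addObj_trans hQR₁mem (addObj_biprod_right Q' R₁)
    exact ⟨fun hX => addObj_trans hbwd hX, fun hX => addObj_trans hfwd hX⟩

end Paper
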